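/- Let l, k ≥ 0, δ, e, α, b ∈ ℝ^l, ζ ∈ ℝ^k, c, c₀ ∈ ℝ, and suppose there exists (x,z) ∈ ℝ^l × ℝ^k with Σᵢ(½αᵢxᵢ² + bᵢxᵢ) + Σⱼ zⱼ + c < 0. If the problem (P₂): minimize Σᵢ(δᵢyᵢ + eᵢxᵢ) + Σⱼ ζⱼzⱼ + c₀ over x, y ∈ ℝ^l, z ∈ ℝ^k subject to Σᵢ(αᵢyᵢ + bᵢxᵢ) + Σⱼ zⱼ + c ≤ 0 and ½xᵢ² ≤ yᵢ for all i, is unbounded from below, then the problem (P₃): minimize Σᵢ(½δᵢxᵢ² + eᵢxᵢ) + Σⱼ ζⱼzⱼ + c₀ over x ∈ ℝ^l, z ∈ ℝ^k subject to Σᵢ(½αᵢxᵢ² + bᵢxᵢ) + Σⱼ zⱼ + c ≤ 0, is also unbounded from below. -/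

import Mathlib

open scoped Classical

/-- The objective `f(x,u,w) = Σᵢ(½δᵢxᵢ² + eᵢxᵢ) + Σⱼ(ζⱼuⱼwⱼ + ½wⱼ² + ηⱼwⱼ)` of problem (P₁). -/
noncomputable def quadObj {l k : ℕ} (δ e : Fin l → ℝ) (ζ η : Fin k → ℝ)
    (x : Fin l → ℝ) (u w : Fin k → ℝ) : ℝ :=
  (∑ i, ((1/2) * δ i * x i ^ 2 + e i * x i)) +
    ∑ j, (ζ j * u j * w j + (1/2) * w j ^ 2 + η j * w j)

/-- The constraint function `h(x,u,w) = Σᵢ(½αᵢxᵢ² + bᵢxᵢ) + Σⱼ uⱼwⱼ + c` of problem (P₁). -/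
noncomputable def quadCon {l k : ℕ} (α b : Fin l → ℝ) (c : ℝ)
    (x : Fin l → ℝ) (u w : Fin k → ℝ) : ℝ :=
  (∑ i, ((1/2) * α i * x i ^ 2 + b i * x i)) + (∑ j, u j * w j) + c

/-- The SOCP objective `Σᵢ(δᵢyᵢ + eᵢxᵢ) + Σⱼ ζⱼzⱼ + c₀` of problem (P₂). -/
noncomputable def socpObj {l k : ℕ} (δ e : Fin l → ℝ) (ζ : Fin k → ℝ) (c₀ : ℝ)
    (x y : Fin l → ℝ) (z : Fin k → ℝ) : ℝ :=
  (∑ i, (δ i * y i + e i * x i)) + (∑ j, ζ j * z j) + c₀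

/-- The linear part `Σᵢ(αᵢyᵢ + bᵢxᵢ) + Σⱼ zⱼ` of the SOCP constraint in (P₂). -/
noncomputable def socpConLhs {l k : ℕ} (α b : Fin l → ℝ)
    (x y : Fin l → ℝ) (z : Fin k → ℝ) : ℝ :=
  (∑ i, (α i * y i + b i * x i)) + ∑ j, z j

open Finset

set_option maxHeartbeats 1000000



namespace Stmt10Aux

lemma sum_update_apply {n : ℕ} (F : Fin n → ℝ → ℝ) (x : Fin n → ℝ) (i₀ : Fin n) (v : ℝ) :
    ∑ i, F i (Function.update x i₀ v i) = (∑ i, F i (x i)) - F i₀ (x i₀) + F i₀ v := by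
  classical
  have h1 : ∀ i, F i (Function.update x i₀ v i)
      = Function.update (fun i => F i (x i)) i₀ (F i₀ v) i := by
    intro i
    rcases eq_or_ne i i₀ with rfl | h
    · simp
    · simp [Function.update_of_ne h]
  rw [Finset.sum_congr rfl (fun i _ => h1 i), Finset.sum_update_of_mem (Finset.mem_univ i₀)]
  have h2 : ∑ i ∈ Finset.univ \ {i₀}, F i (x i) = (∑ i, F i (x i)) - F i₀ (x i₀) := by
    rw [← Finset.erase_eq]
    have := Finset.sum_erase_add Finset.univ (fun i => F i (x i)) (Finset.mem_univ i₀)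
    linarith
  rw [h2]; ring

lemma sign_choice (ε : ℝ) : ∃ τ : ℝ, (τ = 1 ∨ τ = -1) ∧ ε * τ ≤ 0 ∧ (ε ≠ 0 → ε * τ < 0) := by
  rcases le_or_gt 0 ε with h | h
  · refine ⟨-1, Or.inr rfl, by nlinarith, fun hne => by
      have : 0 < ε := lt_of_le_of_ne h (Ne.symm hne)
      nlinarith⟩
  · exact ⟨1, Or.inl rfl, by nlinarith, fun _ => by nlinarith⟩

lemma sign_choice' (v : ℝ) : ∃ τ : ℝ, (τ = 1 ∨ τ = -1) ∧ v * τ = -|v| := by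
  rcases le_or_gt 0 v with h | h
  · exact ⟨-1, Or.inr rfl, by rw [abs_of_nonneg h]; ring⟩
  · exact ⟨1, Or.inl rfl, by rw [abs_of_neg h]; ring⟩

lemma psi_bound (d ε τ : ℝ) (hτ : τ = 1 ∨ τ = -1)
    (h : d < 0 ∨ (d = 0 ∧ ε * τ < 0)) :
    ∃ B, 0 < B ∧ ∃ A, ∀ s : ℝ, 0 ≤ s →
      (1/2) * d * (τ*s)^2 + ε * (τ*s) ≤ A - B * s := by
  have hτ2 : τ^2 = 1 := by rcases hτ with rfl | rfl <;> norm_num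
  have habs : ∀ s : ℝ, 0 ≤ s → ε * (τ*s) ≤ |ε| * s := by
    intro s hs
    have h1 : ε * (τ*s) = (ε*τ) * s := by ring
    have h2 : (ε*τ) * s ≤ |ε*τ| * s := mul_le_mul_of_nonneg_right (le_abs_self _) hs
    have h3 : |ε*τ| = |ε| := by
      rw [abs_mul]; rcases hτ with rfl | rfl <;> simp
    rw [h3] at h2; linarith [h1 ▸ h2]
  rcases h with hd | ⟨hd0, hετ⟩
  · refine ⟨1, one_pos, (|ε|+1) * (2*(|ε|+1)/(-d)), ?_⟩
    intro s hs
    have hsq : (τ*s)^2 = s^2 := by rw [mul_pow, hτ2]; ring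
    have h1 : ε * (τ*s) ≤ |ε| * s := habs s hs
    have hd' : 0 < -d := by linarith
    rcases le_or_gt s (2*(|ε|+1)/(-d)) with h2 | h2
    · have h3 : (1/2)*d*s^2 ≤ 0 := by nlinarith [sq_nonneg s]
      have h4 : (|ε|+1)*s ≤ (|ε|+1)*(2*(|ε|+1)/(-d)) :=
        mul_le_mul_of_nonneg_left h2 (by positivity)
      rw [hsq]; nlinarith
    · have h3 : 2*(|ε|+1)/(-d) < s := h2
      have h4 : 2*(|ε|+1) < (-d)*s := by
        rw [div_lt_iff₀ hd'] at h3; linarith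
      rw [hsq]
      have h5 : (1/2)*d*s^2 + (|ε|+1)*s ≤ 0 := by nlinarith
      have h6 : (0:ℝ) ≤ (|ε|+1) * (2*(|ε|+1)/(-d)) := by positivity
      linarith
  · refine ⟨-(ε*τ), by linarith, 0, ?_⟩
    intro s hs
    have h1 : (1/2) * d * (τ*s)^2 + ε * (τ*s) = (ε*τ)*s := by rw [hd0]; ring
    rw [h1]; ring_nf; nlinarith

lemma quad_ge (a bb C : ℝ) (ha : 0 < a) :
    ∃ s₁, 0 ≤ s₁ ∧ ∀ s, s₁ ≤ s → C ≤ (1/2)*a*s^2 + bb*s := by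
  refine ⟨max (2*(|bb|+1)/a) (|C|), le_trans (abs_nonneg C) (le_max_right _ _), ?_⟩
  intro s hs
  have h1 : 2*(|bb|+1)/a ≤ s := le_trans (le_max_left _ _) hs
  have h2 : |C| ≤ s := le_trans (le_max_right _ _) hs
  have hs0 : 0 ≤ s := le_trans (abs_nonneg C) h2
  have h3 : 2*(|bb|+1) ≤ a * s := by rw [div_le_iff₀ ha] at h1; linarith
  have h4 : -|bb| * s ≤ bb * s := mul_le_mul_of_nonneg_right (neg_abs_le bb) hs0
  have h5 : C ≤ s := le_trans (le_abs_self C) h2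
  nlinarith [mul_nonneg (sub_nonneg.2 h3) hs0]

lemma quad_ge' (a bb C τ : ℝ) (ha : 0 < a) (hτ : τ = 1 ∨ τ = -1) :
    ∃ s₁, 0 ≤ s₁ ∧ ∀ s, s₁ ≤ s → C ≤ (1/2)*a*(τ*s)^2 + bb*(τ*s) := by
  obtain ⟨s₁, hs₁0, hs₁⟩ := quad_ge a (bb*τ) C ha
  have hτ2 : τ^2 = 1 := by rcases hτ with rfl | rfl <;> norm_num
  refine ⟨s₁, hs₁0, fun s hs => ?_⟩
  have := hs₁ s hs
  have heq : (1/2)*a*(τ*s)^2 + bb*(τ*s) = (1/2)*a*s^2 + (bb*τ)*s := by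
    rw [mul_pow]; rw [hτ2]; ring
  linarith [heq ▸ this]

lemma quad_le' (a bb C τ : ℝ) (ha : a < 0) (hτ : τ = 1 ∨ τ = -1) :
    ∃ s₁, 0 ≤ s₁ ∧ ∀ s, s₁ ≤ s → (1/2)*a*(τ*s)^2 + bb*(τ*s) ≤ C := by
  obtain ⟨s₁, hs₁0, hs₁⟩ := quad_ge' (-a) (-bb) (-C) τ (by linarith) hτ
  exact ⟨s₁, hs₁0, fun s hs => by have := hs₁ s hs; nlinarith⟩

lemma solve_quad (a bb T ε : ℝ) (h : (0 < a ∧ 0 ≤ T) ∨ (a < 0 ∧ T ≤ 0)) :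
    ∃ w, (1/2)*a*w^2 + bb*w = T ∧ ε*w ≤ 0 := by
  obtain ⟨τ, hτ, hετ, -⟩ := sign_choice ε
  have hτ2 : τ^2 = 1 := by rcases hτ with rfl | rfl <;> norm_num
  have haT : 0 ≤ 2*a*T := by rcases h with ⟨ha, hT⟩ | ⟨ha, hT⟩ <;> nlinarith
  have h2aT : 0 ≤ bb^2 + 2*a*T := by nlinarith [sq_nonneg bb]
  have hane : a ≠ 0 := by rcases h with ⟨ha, _⟩ | ⟨ha, _⟩ <;> [exact ne_of_gt ha; exact ne_of_lt ha]
  set R := Real.sqrt (bb^2 + 2*a*T) with hRdef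
  have hR2 : R^2 = bb^2 + 2*a*T := Real.sq_sqrt h2aT
  have hRnn : 0 ≤ R := Real.sqrt_nonneg _
  have habsbb : |bb*τ| ≤ R := by
    have h1 : |bb*τ| = |bb| := by rw [abs_mul]; rcases hτ with rfl | rfl <;> simp
    have h2 : |bb| ≤ R := by
      rw [hRdef]
      calc |bb| = Real.sqrt (bb^2) := (Real.sqrt_sq_eq_abs bb).symm
        _ ≤ _ := Real.sqrt_le_sqrt (by linarith)
    linarith [h1 ▸ h2]
  obtain ⟨hble, hbge⟩ := abs_le.mp habsbb
  have main : ∀ u : ℝ, 0 ≤ u → (a*u)^2 + 2*(bb*τ)*(a*u) = 2*a*T →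
      ∃ w, (1/2)*a*w^2 + bb*w = T ∧ ε*w ≤ 0 := by
    intro u hu hau
    refine ⟨τ*u, ?_, ?_⟩
    · have hττ : (τ*u)^2 = u^2 := by rw [mul_pow, hτ2]; ring
      have h5 : 2*a*((1/2)*a*(τ*u)^2 + bb*(τ*u)) = (a*u)^2 + 2*(bb*τ)*(a*u) := by
        rw [hττ]; ring
      have h6 : 2*a*((1/2)*a*(τ*u)^2 + bb*(τ*u)) = 2*a*T := by rw [h5, hau]
      exact mul_left_cancel₀ (by simpa using hane) h6
    · calc ε*(τ*u) = (ε*τ)*u := by ring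
        _ ≤ 0 := mul_nonpos_of_nonpos_of_nonneg hετ hu
  rcases h with ⟨ha, hT⟩ | ⟨ha, hT⟩
  · refine main ((R - bb*τ)/a) (div_nonneg (by linarith) ha.le) ?_
    have hau : a * ((R - bb*τ)/a) = R - bb*τ := by field_simp
    rw [hau]; linear_combination hR2 - bb^2 * hτ2
  · refine main ((bb*τ + R)/(-a)) (div_nonneg (by linarith) (by linarith)) ?_
    have hau : a * ((bb*τ + R)/(-a)) = -(bb*τ + R) := by
      rw [div_neg, mul_neg, mul_div_assoc', mul_comm, mul_div_assoc, div_self hane, mul_one]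
    rw [hau]; linear_combination hR2 - bb^2 * hτ2


lemma pick_tau (d ε : ℝ) (h : d < 0 ∨ (d = 0 ∧ ε ≠ 0)) :
    ∃ τ, (τ = 1 ∨ τ = -1) ∧ ∃ B, 0 < B ∧ ∃ A, ∀ s, 0 ≤ s →
      (1/2) * d * (τ*s)^2 + ε * (τ*s) ≤ A - B*s := by
  rcases h with hneg | ⟨h0, hne⟩
  · obtain ⟨B, hB, A, hA⟩ := psi_bound d ε 1 (Or.inl rfl) (Or.inl hneg)
    exact ⟨1, Or.inl rfl, B, hB, A, hA⟩
  · obtain ⟨τ, hτ, -, hlt⟩ := sign_choice ε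
    obtain ⟨B, hB, A, hA⟩ := psi_bound d ε τ hτ (Or.inr ⟨h0, hlt hne⟩)
    exact ⟨τ, hτ, B, hB, A, hA⟩

lemma quad_min (d ε X Y : ℝ) (hd : 0 ≤ d) (hde : d = 0 → ε = 0)
    (hxy : (1/2)*X^2 ≤ Y) : -(ε^2/(2*d)) ≤ d*Y + ε*X := by
  rcases eq_or_lt_of_le hd with heq | hlt
  · have hε : ε = 0 := hde heq.symm
    rw [hε, ← heq]; simp
  · have h2d : 0 < 2*d := by linarith
    rw [show -(ε^2/(2*d)) = (-ε^2)/(2*d) by ring, div_le_iff₀ h2d]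
    nlinarith [sq_nonneg (d*X + ε), mul_le_mul_of_nonneg_left hxy (mul_nonneg hlt.le hlt.le)]

lemma lin_le (bb x0 τ s : ℝ) (hbτ : bb*τ = -|bb|) (hs : |x0| ≤ s) :
    bb*(τ*s) ≤ bb*x0 := by
  have h1 : bb*(τ*s) = (bb*τ)*s := by ring
  rw [h1, hbτ]
  nlinarith [neg_abs_le (bb*x0), abs_mul bb x0, abs_nonneg bb,
    mul_le_mul_of_nonneg_left hs (abs_nonneg bb)]

section Leaves

variable {l k : ℕ} (δ e α b : Fin l → ℝ) (ζ : Fin k → ℝ) (c c₀ : ℝ)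

def Goal : Prop := ∀ M : ℝ, ∃ (x : Fin l → ℝ) (z : Fin k → ℝ),
  (∑ i, ((1/2) * α i * x i ^ 2 + b i * x i)) + (∑ j, z j) + c ≤ 0 ∧
  (∑ i, ((1/2) * δ i * x i ^ 2 + e i * x i)) + (∑ j, ζ j * z j) + c₀ < M

lemma of_family (xs : ℝ → Fin l → ℝ) (zs : ℝ → Fin k → ℝ) (s₀ A B : ℝ) (hB : 0 < B)
    (hh : ∀ s, s₀ ≤ s →
      (∑ i, ((1/2) * α i * (xs s i) ^ 2 + b i * (xs s i))) + (∑ j, zs s j) + c ≤ 0)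
    (hf : ∀ s, s₀ ≤ s →
      (∑ i, ((1/2) * δ i * (xs s i) ^ 2 + e i * (xs s i))) + (∑ j, ζ j * zs s j) + c₀ ≤ A - B*s) :
    Goal δ e α b ζ c c₀ := by
  intro M
  set s := max s₀ ((A - M)/B + 1) with hs
  refine ⟨xs s, zs s, hh s (le_max_left _ _), lt_of_le_of_lt (hf s (le_max_left _ _)) ?_⟩
  have h1 : (A - M)/B + 1 ≤ s := le_max_right _ _
  have h2 : B*((A - M)/B + 1) ≤ B*s := mul_le_mul_of_nonneg_left h1 hB.le
  have h3 : B*((A - M)/B + 1) = A - M + B := by field_simp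
  linarith

lemma leaf_noabsorb (x₀ : Fin l → ℝ) (z₀ : Fin k → ℝ)
    (hsl : (∑ i, ((1/2) * α i * (x₀ i) ^ 2 + b i * (x₀ i))) + (∑ j, z₀ j) + c < 0)
    (i₀ : Fin l) (τ : ℝ) (s₁ : ℝ) (hs₁ : 0 ≤ s₁)
    (hP : ∀ s, s₁ ≤ s →
      (1/2) * α i₀ * (τ*s)^2 + b i₀ * (τ*s) ≤ (1/2) * α i₀ * (x₀ i₀)^2 + b i₀ * (x₀ i₀))
    (B A : ℝ) (hB : 0 < B)
    (hQ : ∀ s, 0 ≤ s → (1/2) * δ i₀ * (τ*s)^2 + e i₀ * (τ*s) ≤ A - B*s) :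
    Goal δ e α b ζ c c₀ := by
  apply of_family δ e α b ζ c c₀ (fun s => Function.update x₀ i₀ (τ*s)) (fun _ => z₀) s₁
    (A + ((∑ i, ((1/2) * δ i * (x₀ i) ^ 2 + e i * (x₀ i)))
      - ((1/2) * δ i₀ * (x₀ i₀)^2 + e i₀ * (x₀ i₀)) + (∑ j, ζ j * z₀ j) + c₀)) B hB
  · intro s hs
    have hsum := sum_update_apply (fun i w => (1/2) * α i * w ^ 2 + b i * w) x₀ i₀ (τ*s)
    have := hP s hs
    linarith [hsum]
  · intro s hs
    have hsum := sum_update_apply (fun i w => (1/2) * δ i * w ^ 2 + e i * w) x₀ i₀ (τ*s)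
    have := hQ s (le_trans hs₁ hs)
    linarith [hsum]

lemma leaf_absorb (x₀ : Fin l → ℝ) (z₀ : Fin k → ℝ)
    (hsl : (∑ i, ((1/2) * α i * (x₀ i) ^ 2 + b i * (x₀ i))) + (∑ j, z₀ j) + c < 0)
    (i₀ j₀ : Fin l) (hij : i₀ ≠ j₀) (lam τ : ℝ)
    (hdj : δ j₀ + lam * α j₀ ≤ 0)
    (s₁ : ℝ) (hs₁ : 0 ≤ s₁) (w : ℝ → ℝ)
    (hw : ∀ s, s₁ ≤ s →
      ((1/2) * α j₀ * (w s)^2 + b j₀ * (w s)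
        = ((1/2) * α j₀ * (x₀ j₀)^2 + b j₀ * (x₀ j₀))
          + ((1/2) * α i₀ * (x₀ i₀)^2 + b i₀ * (x₀ i₀))
          - ((1/2) * α i₀ * (τ*s)^2 + b i₀ * (τ*s))
        ∧ (e j₀ + lam * b j₀) * (w s) ≤ 0))
    (B A : ℝ) (hB : 0 < B)
    (hψ : ∀ s, 0 ≤ s →
      (1/2) * (δ i₀ + lam * α i₀) * (τ*s)^2 + (e i₀ + lam * b i₀) * (τ*s) ≤ A - B*s) :
    Goal δ e α b ζ c c₀ := by
  apply of_family δ e α b ζ c c₀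
    (fun s => Function.update (Function.update x₀ i₀ (τ*s)) j₀ (w s)) (fun _ => z₀) s₁
    (A + ((∑ i, ((1/2) * δ i * (x₀ i) ^ 2 + e i * (x₀ i)))
      - ((1/2) * δ i₀ * (x₀ i₀)^2 + e i₀ * (x₀ i₀))
      - ((1/2) * δ j₀ * (x₀ j₀)^2 + e j₀ * (x₀ j₀))
      - lam * (((1/2) * α i₀ * (x₀ i₀)^2 + b i₀ * (x₀ i₀))
              + ((1/2) * α j₀ * (x₀ j₀)^2 + b j₀ * (x₀ j₀)))
      + (∑ j, ζ j * z₀ j) + c₀)) B hB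
  · intro s hs
    obtain ⟨hweq, -⟩ := hw s hs
    have hsum1 := sum_update_apply (fun i v => (1/2) * α i * v ^ 2 + b i * v) x₀ i₀ (τ*s)
    have hsum2 := sum_update_apply (fun i v => (1/2) * α i * v ^ 2 + b i * v)
      (Function.update x₀ i₀ (τ*s)) j₀ (w s)
    have hx' : Function.update x₀ i₀ (τ*s) j₀ = x₀ j₀ := Function.update_of_ne (Ne.symm hij) _ _
    rw [hx'] at hsum2
    linarith [hsum1, hsum2]
  · intro s hs
    obtain ⟨hweq, hwle⟩ := hw s hs
    have hsum1 := sum_update_apply (fun i v => (1/2) * δ i * v ^ 2 + e i * v) x₀ i₀ (τ*s)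
    have hsum2 := sum_update_apply (fun i v => (1/2) * δ i * v ^ 2 + e i * v)
      (Function.update x₀ i₀ (τ*s)) j₀ (w s)
    have hx' : Function.update x₀ i₀ (τ*s) j₀ = x₀ j₀ := Function.update_of_ne (Ne.symm hij) _ _
    rw [hx'] at hsum2
    have hψs := hψ s (le_trans hs₁ hs)
    -- Q i₀ (τ s) = ψ - lam * P i₀ (τ s)
    have hQi : (1/2) * δ i₀ * (τ*s)^2 + e i₀ * (τ*s)
        = ((1/2) * (δ i₀ + lam * α i₀) * (τ*s)^2 + (e i₀ + lam * b i₀) * (τ*s))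
          - lam * ((1/2) * α i₀ * (τ*s)^2 + b i₀ * (τ*s)) := by ring
    -- Q j₀ (w s) ≤ - lam * P j₀ (w s)
    have hQj : (1/2) * δ j₀ * (w s)^2 + e j₀ * (w s)
        ≤ - lam * ((1/2) * α j₀ * (w s)^2 + b j₀ * (w s)) := by
      have h1 : (1/2) * δ j₀ * (w s)^2 + e j₀ * (w s)
          = (1/2) * (δ j₀ + lam * α j₀) * (w s)^2 + (e j₀ + lam * b j₀) * (w s)
            - lam * ((1/2) * α j₀ * (w s)^2 + b j₀ * (w s)) := by ring
      have h2 : (1/2) * (δ j₀ + lam * α j₀) * (w s)^2 ≤ 0 := by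
        have := sq_nonneg (w s); nlinarith
      linarith
    -- combine: P i₀(τs) + P j₀(w s) = P i₀⁰ + P j₀⁰
    have hPsum : ((1/2) * α i₀ * (τ*s)^2 + b i₀ * (τ*s))
        + ((1/2) * α j₀ * (w s)^2 + b j₀ * (w s))
        = ((1/2) * α i₀ * (x₀ i₀)^2 + b i₀ * (x₀ i₀))
          + ((1/2) * α j₀ * (x₀ j₀)^2 + b j₀ * (x₀ j₀)) := by linarith
    have hstep : lam * ((1/2) * α i₀ * (τ*s)^2 + b i₀ * (τ*s))
        + lam * ((1/2) * α j₀ * (w s)^2 + b j₀ * (w s))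
        = lam * (((1/2) * α i₀ * (x₀ i₀)^2 + b i₀ * (x₀ i₀))
          + ((1/2) * α j₀ * (x₀ j₀)^2 + b j₀ * (x₀ j₀))) := by
      rw [← mul_add, hPsum]
    linarith [hsum1, hsum2, hψs, hQi, hQj, hstep]

lemma leaf_zabsorb (x₀ : Fin l → ℝ) (z₀ : Fin k → ℝ)
    (hsl : (∑ i, ((1/2) * α i * (x₀ i) ^ 2 + b i * (x₀ i))) + (∑ j, z₀ j) + c < 0)
    (i₀ : Fin l) (j₀ : Fin k) (lam τ : ℝ) (hζj : ζ j₀ = -lam)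
    (B A : ℝ) (hB : 0 < B)
    (hψ : ∀ s, 0 ≤ s →
      (1/2) * (δ i₀ + lam * α i₀) * (τ*s)^2 + (e i₀ + lam * b i₀) * (τ*s) ≤ A - B*s) :
    Goal δ e α b ζ c c₀ := by
  apply of_family δ e α b ζ c c₀ (fun s => Function.update x₀ i₀ (τ*s))
    (fun s => Function.update z₀ j₀ (z₀ j₀ + ((1/2) * α i₀ * (x₀ i₀)^2 + b i₀ * (x₀ i₀))
      - ((1/2) * α i₀ * (τ*s)^2 + b i₀ * (τ*s)))) 0
    (A + ((∑ i, ((1/2) * δ i * (x₀ i) ^ 2 + e i * (x₀ i)))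
      - ((1/2) * δ i₀ * (x₀ i₀)^2 + e i₀ * (x₀ i₀))
      - lam * ((1/2) * α i₀ * (x₀ i₀)^2 + b i₀ * (x₀ i₀))
      + (∑ j, ζ j * z₀ j) + c₀)) B hB
  · intro s hs
    have hsum1 := sum_update_apply (fun i v => (1/2) * α i * v ^ 2 + b i * v) x₀ i₀ (τ*s)
    have hsum2 := sum_update_apply (fun _ v => v) z₀ j₀
      (z₀ j₀ + ((1/2) * α i₀ * (x₀ i₀)^2 + b i₀ * (x₀ i₀))
        - ((1/2) * α i₀ * (τ*s)^2 + b i₀ * (τ*s)))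
    linarith [hsum1, hsum2]
  · intro s hs
    have hsum1 := sum_update_apply (fun i v => (1/2) * δ i * v ^ 2 + e i * v) x₀ i₀ (τ*s)
    have hsum2 := sum_update_apply (fun j v => ζ j * v) z₀ j₀
      (z₀ j₀ + ((1/2) * α i₀ * (x₀ i₀)^2 + b i₀ * (x₀ i₀))
        - ((1/2) * α i₀ * (τ*s)^2 + b i₀ * (τ*s)))
    rw [hζj] at hsum2
    have hψs := hψ s hs
    have hQi : (1/2) * δ i₀ * (τ*s)^2 + e i₀ * (τ*s)
        = ((1/2) * (δ i₀ + lam * α i₀) * (τ*s)^2 + (e i₀ + lam * b i₀) * (τ*s))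
          - lam * ((1/2) * α i₀ * (τ*s)^2 + b i₀ * (τ*s)) := by ring
    have hz : -lam * (z₀ j₀ + ((1/2) * α i₀ * (x₀ i₀)^2 + b i₀ * (x₀ i₀))
        - ((1/2) * α i₀ * (τ*s)^2 + b i₀ * (τ*s)))
        = -lam * z₀ j₀ - lam * ((1/2) * α i₀ * (x₀ i₀)^2 + b i₀ * (x₀ i₀))
          + lam * ((1/2) * α i₀ * (τ*s)^2 + b i₀ * (τ*s)) := by ring
    linarith [hsum1, hsum2, hψs, hQi, hz]

lemma leaf_znonconst (x₀ : Fin l → ℝ) (z₀ : Fin k → ℝ)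
    (hsl : (∑ i, ((1/2) * α i * (x₀ i) ^ 2 + b i * (x₀ i))) + (∑ j, z₀ j) + c < 0)
    (j₁ j₂ : Fin k) (hj : ζ j₁ < ζ j₂) :
    Goal δ e α b ζ c c₀ := by
  have hne : j₁ ≠ j₂ := fun h => absurd (h ▸ hj) (lt_irrefl _)
  apply of_family δ e α b ζ c c₀ (fun _ => x₀)
    (fun s => Function.update (Function.update z₀ j₁ (z₀ j₁ + s)) j₂ (z₀ j₂ - s)) 0
    ((∑ i, ((1/2) * δ i * (x₀ i) ^ 2 + e i * (x₀ i))) + (∑ j, ζ j * z₀ j) + c₀)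
    (ζ j₂ - ζ j₁) (by linarith)
  · intro s hs
    have hsum1 := sum_update_apply (fun _ v => v) z₀ j₁ (z₀ j₁ + s)
    have hsum2 := sum_update_apply (fun _ v => v) (Function.update z₀ j₁ (z₀ j₁ + s)) j₂ (z₀ j₂ - s)
    have hz' : Function.update z₀ j₁ (z₀ j₁ + s) j₂ = z₀ j₂ := Function.update_of_ne (Ne.symm hne) _ _
    rw [hz'] at hsum2
    linarith [hsum1, hsum2]
  · intro s hs
    have hsum1 := sum_update_apply (fun j v => ζ j * v) z₀ j₁ (z₀ j₁ + s)
    have hsum2 := sum_update_apply (fun j v => ζ j * v) (Function.update z₀ j₁ (z₀ j₁ + s)) j₂ (z₀ j₂ - s)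
    have hz' : Function.update z₀ j₁ (z₀ j₁ + s) j₂ = z₀ j₂ := Function.update_of_ne (Ne.symm hne) _ _
    rw [hz'] at hsum2
    have h1 : ζ j₁ * (z₀ j₁ + s) = ζ j₁ * z₀ j₁ + ζ j₁ * s := by ring
    have h2 : ζ j₂ * (z₀ j₂ - s) = ζ j₂ * z₀ j₂ - ζ j₂ * s := by ring
    have h3 : (ζ j₂ - ζ j₁) * s = ζ j₂ * s - ζ j₁ * s := by ring
    linarith [hsum1, hsum2]

lemma leaf_zpos (x₀ : Fin l → ℝ) (z₀ : Fin k → ℝ)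
    (hsl : (∑ i, ((1/2) * α i * (x₀ i) ^ 2 + b i * (x₀ i))) + (∑ j, z₀ j) + c < 0)
    (j₀ : Fin k) (hj : 0 < ζ j₀) :
    Goal δ e α b ζ c c₀ := by
  apply of_family δ e α b ζ c c₀ (fun _ => x₀)
    (fun s => Function.update z₀ j₀ (z₀ j₀ - s)) 0
    ((∑ i, ((1/2) * δ i * (x₀ i) ^ 2 + e i * (x₀ i))) + (∑ j, ζ j * z₀ j) + c₀)
    (ζ j₀) hj
  · intro s hs
    have hsum := sum_update_apply (fun _ v => v) z₀ j₀ (z₀ j₀ - s)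
    linarith [hsum]
  · intro s hs
    have hsum := sum_update_apply (fun j v => ζ j * v) z₀ j₀ (z₀ j₀ - s)
    have h1 : ζ j₀ * (z₀ j₀ - s) = ζ j₀ * z₀ j₀ - ζ j₀ * s := by ring
    linarith [hsum]

lemma bounded_contra (lam : ℝ) (hlam : 0 ≤ lam) (hζ : ∀ j, ζ j = -lam)
    (hd : ∀ i, 0 ≤ δ i + lam * α i)
    (hde : ∀ i, δ i + lam * α i = 0 → e i + lam * b i = 0)
    (hunb : ∀ M : ℝ, ∃ (x y : Fin l → ℝ) (z : Fin k → ℝ),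
      _root_.socpConLhs α b x y z + c ≤ 0 ∧ (∀ i, (1/2) * x i ^ 2 ≤ y i) ∧
      _root_.socpObj δ e ζ c₀ x y z < M) : False := by
  obtain ⟨x, y, z, hcon, hxy, hobj⟩ := hunb
    ((∑ i, -((e i + lam * b i)^2/(2*(δ i + lam * α i)))) + lam * c + c₀)
  rw [_root_.socpObj] at hobj
  rw [_root_.socpConLhs] at hcon
  have hterm : ∀ i : Fin l, -((e i + lam * b i)^2/(2*(δ i + lam * α i)))
      ≤ (δ i + lam * α i) * y i + (e i + lam * b i) * x i := by
    intro i
    exact quad_min _ _ (x i) (y i) (hd i) (hde i) (hxy i)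
  have hsum : (∑ i, -((e i + lam * b i)^2/(2*(δ i + lam * α i))))
      ≤ ∑ i, ((δ i + lam * α i) * y i + (e i + lam * b i) * x i) :=
    Finset.sum_le_sum (fun i _ => hterm i)
  have hsplit : ∑ i, ((δ i + lam * α i) * y i + (e i + lam * b i) * x i)
      = (∑ i, (δ i * y i + e i * x i)) + lam * (∑ i, (α i * y i + b i * x i)) := by
    rw [Finset.mul_sum, ← Finset.sum_add_distrib]
    exact Finset.sum_congr rfl (fun i _ => by ring)
  have hzsum : (∑ j, ζ j * z j) = -lam * ∑ j, z j := by
    rw [Finset.mul_sum]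
    exact Finset.sum_congr rfl (fun j _ => by rw [hζ j])
  have hconlam : lam * ((∑ i, (α i * y i + b i * x i)) + ∑ j, z j) ≤ lam * (-c) :=
    mul_le_mul_of_nonneg_left (by linarith) hlam
  have hexp : lam * ((∑ i, (α i * y i + b i * x i)) + ∑ j, z j)
      = lam * (∑ i, (α i * y i + b i * x i)) + lam * ∑ j, z j := by ring
  linarith [hsum, hsplit, hzsum, hconlam, hexp, hobj]


end Leaves

end Stmt10Aux

open Stmt10Aux

/-- Lemma 2.3 of Jiang–Li–Wu: if the SOCP relaxation (P₂) is unbounded from below then the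
separable problem (P₃) is unbounded from below. -/
theorem stmt_10 (l k : ℕ) (δ e α b : Fin l → ℝ) (ζ : Fin k → ℝ) (c c₀ : ℝ)
    (hslater : ∃ (x : Fin l → ℝ) (z : Fin k → ℝ),
      (∑ i, ((1/2) * α i * x i ^ 2 + b i * x i)) + (∑ j, z j) + c < 0)
    (hunb : ∀ M : ℝ, ∃ (x y : Fin l → ℝ) (z : Fin k → ℝ),
      socpConLhs α b x y z + c ≤ 0 ∧ (∀ i, (1/2) * x i ^ 2 ≤ y i) ∧
      socpObj δ e ζ c₀ x y z < M) :
    ∀ M : ℝ, ∃ (x : Fin l → ℝ) (z : Fin k → ℝ),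
      (∑ i, ((1/2) * α i * x i ^ 2 + b i * x i)) + (∑ j, z j) + c ≤ 0 ∧
      (∑ i, ((1/2) * δ i * x i ^ 2 + e i * x i)) + (∑ j, ζ j * z j) + c₀ < M := by
  classical
  obtain ⟨x₀, z₀, hsl⟩ := hslater
  show Goal δ e α b ζ c c₀
  by_cases hζne : ∃ j₁ j₂ : Fin k, ζ j₁ < ζ j₂
  · obtain ⟨j₁, j₂, hj⟩ := hζne
    exact leaf_znonconst δ e α b ζ c c₀ x₀ z₀ hsl j₁ j₂ hj
  push_neg at hζne
  by_cases hζpos : ∃ j, 0 < ζ j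
  · obtain ⟨j₀, hj₀⟩ := hζpos
    exact leaf_zpos δ e α b ζ c c₀ x₀ z₀ hsl j₀ hj₀
  push_neg at hζpos
  by_cases hk : Nonempty (Fin k)
  · -- k nonempty: z is a perfect absorber
    obtain ⟨j₀⟩ := hk
    have hlam : 0 ≤ -ζ j₀ := neg_nonneg.mpr (hζpos j₀)
    have hζall : ∀ j, ζ j = -(-ζ j₀) := by
      intro j
      have h1 : ζ j = ζ j₀ := le_antisymm (hζne j₀ j) (hζne j j₀)
      rw [h1]; ring
    by_cases hbad : ∃ i, δ i + (-ζ j₀) * α i < 0 ∨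
        (δ i + (-ζ j₀) * α i = 0 ∧ e i + (-ζ j₀) * b i ≠ 0)
    · obtain ⟨i₀, hi₀⟩ := hbad
      obtain ⟨τ, hτ, B, hB, A, hψ⟩ := pick_tau (δ i₀ + (-ζ j₀) * α i₀) (e i₀ + (-ζ j₀) * b i₀) hi₀
      exact leaf_zabsorb δ e α b ζ c c₀ x₀ z₀ hsl i₀ j₀ (-ζ j₀) τ (hζall j₀) B A hB hψ
    · push_neg at hbad
      exact (bounded_contra δ e α b ζ c c₀ (-ζ j₀) hlam hζall
        (fun i => (hbad i).1) (fun i => (hbad i).2) hunb).elim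
  · -- k empty
    have hζall0 : ∀ (lam : ℝ) (j : Fin k), ζ j = -lam := fun lam j => absurd ⟨j⟩ hk
    by_cases h1 : ∃ i, δ i < 0 ∧ α i < 0
    · obtain ⟨i₀, hδ0, hα0⟩ := h1
      obtain ⟨s₁, hs₁0, hP⟩ := quad_le' (α i₀) (b i₀)
        ((1/2) * α i₀ * (x₀ i₀)^2 + b i₀ * (x₀ i₀)) 1 hα0 (Or.inl rfl)
      obtain ⟨B, hB, A, hQ⟩ := psi_bound (δ i₀) (e i₀) 1 (Or.inl rfl) (Or.inl hδ0)
      exact leaf_noabsorb δ e α b ζ c c₀ x₀ z₀ hsl i₀ 1 s₁ hs₁0 hP B A hB hQ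
    by_cases h2 : ∃ i, δ i < 0 ∧ α i = 0
    · obtain ⟨i₀, hδ0, hα0⟩ := h2
      obtain ⟨τ, hτ, hbτ⟩ := sign_choice' (b i₀)
      have hP : ∀ s, |x₀ i₀| ≤ s →
          (1/2) * α i₀ * (τ*s)^2 + b i₀ * (τ*s) ≤ (1/2) * α i₀ * (x₀ i₀)^2 + b i₀ * (x₀ i₀) := by
        intro s hs
        have := lin_le (b i₀) (x₀ i₀) τ s hbτ hs
        rw [hα0]; nlinarith
      obtain ⟨B, hB, A, hQ⟩ := psi_bound (δ i₀) (e i₀) τ hτ (Or.inl hδ0)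
      exact leaf_noabsorb δ e α b ζ c c₀ x₀ z₀ hsl i₀ τ |x₀ i₀| (abs_nonneg _) hP B A hB hQ
    by_cases h3 : ∃ i, α i = 0 ∧ δ i = 0 ∧ e i ≠ 0 ∧ 0 ≤ e i * b i
    · obtain ⟨i₀, hα0, hδ0, hene, heb⟩ := h3
      obtain ⟨τ, hτ, hετ, hετlt⟩ := sign_choice (e i₀)
      have hbτ : b i₀ * τ = -|b i₀| := by
        have helt := hετlt hene
        rcases hτ with rfl | rfl
        · have he : e i₀ < 0 := by linarith [helt]
          have hb : b i₀ ≤ 0 := by nlinarith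
          rw [abs_of_nonpos hb]; ring
        · have he : 0 < e i₀ := by nlinarith [helt]
          have hb : 0 ≤ b i₀ := by nlinarith
          rw [abs_of_nonneg hb]; ring
      have hP : ∀ s, |x₀ i₀| ≤ s →
          (1/2) * α i₀ * (τ*s)^2 + b i₀ * (τ*s) ≤ (1/2) * α i₀ * (x₀ i₀)^2 + b i₀ * (x₀ i₀) := by
        intro s hs
        have := lin_le (b i₀) (x₀ i₀) τ s hbτ hs
        rw [hα0]; nlinarith
      obtain ⟨B, hB, A, hQ⟩ := psi_bound (δ i₀) (e i₀) τ hτ (Or.inr ⟨hδ0, hετlt hene⟩)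
      exact leaf_noabsorb δ e α b ζ c c₀ x₀ z₀ hsl i₀ τ |x₀ i₀| (abs_nonneg _) hP B A hB hQ
    by_cases h4 : ∃ i, α i = 0 ∧ δ i = 0 ∧ b i ≠ 0 ∧ e i * b i ≤ 0
    · obtain ⟨i₁, hα1, hδ1, hb1, heb1⟩ := h4
      have hlam : 0 ≤ -(e i₁) / (b i₁) := by
        rcases lt_or_gt_of_ne hb1 with hbneg | hbpos
        · have he : 0 ≤ e i₁ := by nlinarith
          have : -(e i₁) / (b i₁) = (e i₁) / (-(b i₁)) := by ring
          rw [this]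
          exact div_nonneg he (by linarith)
        · have he : e i₁ ≤ 0 := by nlinarith
          exact div_nonneg (by linarith) hbpos.le
      have hε1 : e i₁ + (-(e i₁) / (b i₁)) * b i₁ = 0 := by field_simp; ring
      have hd1 : δ i₁ + (-(e i₁) / (b i₁)) * α i₁ = 0 := by rw [hα1, hδ1]; ring
      by_cases h4b : ∃ i, δ i + (-(e i₁) / (b i₁)) * α i < 0 ∨
          (δ i + (-(e i₁) / (b i₁)) * α i = 0 ∧ e i + (-(e i₁) / (b i₁)) * b i ≠ 0)
      · obtain ⟨i₀, hi₀⟩ := h4b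
        have hne : i₀ ≠ i₁ := by
          rintro rfl
          rcases hi₀ with h | ⟨-, h⟩
          · rw [hd1] at h; exact lt_irrefl _ h
          · exact h hε1
        obtain ⟨τ, hτ, B, hB, A, hψ⟩ := pick_tau _ _ hi₀
        refine leaf_absorb δ e α b ζ c c₀ x₀ z₀ hsl i₀ i₁ hne (-(e i₁) / (b i₁)) τ
          (le_of_eq hd1) 0 le_rfl
          (fun s => (((1/2) * α i₁ * (x₀ i₁)^2 + b i₁ * (x₀ i₁))
            + ((1/2) * α i₀ * (x₀ i₀)^2 + b i₀ * (x₀ i₀))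
            - ((1/2) * α i₀ * (τ*s)^2 + b i₀ * (τ*s))) / b i₁) ?_ B A hB hψ
        intro s hs
        constructor
        · rw [hα1]
          field_simp
          ring
        · simp [hε1]
      · push_neg at h4b
        exact (bounded_contra δ e α b ζ c c₀ (-(e i₁) / (b i₁)) hlam (hζall0 _)
          (fun i => (h4b i).1) (fun i => (h4b i).2) hunb).elim
    -- Step 5
    push_neg at h1 h2 h3 h4
    have hLinert : ∀ i, α i = 0 → δ i = 0 → (b i = 0 ∧ e i = 0) := by
      intro i hα hδ
      by_cases hbe : e i = 0
      · refine ⟨?_, hbe⟩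
        by_contra hbne
        have := h4 i hα hδ hbne
        rw [hbe, zero_mul] at this
        exact lt_irrefl _ this
      · have h5 := h3 i hα hδ hbe
        have hbne : b i ≠ 0 := by
          intro h
          rw [h, mul_zero] at h5
          exact lt_irrefl _ h5
        have := h4 i hα hδ hbne
        linarith
    have hδα : ∀ i, δ i < 0 → 0 < α i := by
      intro i hδ
      rcases lt_trichotomy (α i) 0 with h | h | h
      · exact absurd (h1 i hδ) (not_le.mpr h)
      · exact absurd h (h2 i hδ)
      · exact h
    obtain ⟨lm, hlm0, hP2, hattain⟩ : ∃ lm : ℝ, 0 ≤ lm ∧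
        (∀ i, 0 < α i → 0 ≤ δ i + lm * α i) ∧
        (0 < lm → ∃ i₁, 0 < α i₁ ∧ δ i₁ + lm * α i₁ = 0) := by
      by_cases hSp : (Finset.univ.filter (fun i => 0 < α i)).Nonempty
      · obtain ⟨i₁, hi₁mem, hi₁max⟩ := Finset.exists_max_image _ (fun i => -δ i / α i) hSp
        rw [Finset.mem_filter] at hi₁mem
        refine ⟨max 0 (-δ i₁ / α i₁), le_max_left _ _, ?_, ?_⟩
        · intro i hαi
          have h5 := hi₁max i (Finset.mem_filter.mpr ⟨Finset.mem_univ i, hαi⟩)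
          have h6 : -δ i / α i ≤ max 0 (-δ i₁ / α i₁) := le_trans h5 (le_max_right _ _)
          rw [div_le_iff₀ hαi] at h6
          linarith
        · intro hpos
          have h7 : max 0 (-δ i₁ / α i₁) = -δ i₁ / α i₁ := by
            rcases le_or_gt (-δ i₁ / α i₁) 0 with h | h
            · rw [max_eq_left h] at hpos; exact absurd hpos (lt_irrefl 0)
            · exact max_eq_right h.le
          refine ⟨i₁, hi₁mem.2, ?_⟩
          rw [h7]
          linear_combination div_mul_cancel₀ (-δ i₁) (ne_of_gt hi₁mem.2)
      · refine ⟨0, le_rfl, ?_, fun h => absurd h (lt_irrefl 0)⟩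
        intro i hαi
        exact (hSp ⟨i, Finset.mem_filter.mpr ⟨Finset.mem_univ i, hαi⟩⟩).elim
    have hdall : ∀ i, 0 ≤ δ i + lm * α i ∨ α i < 0 := by
      intro i
      rcases lt_trichotomy (α i) 0 with h | h | h
      · exact Or.inr h
      · left
        rw [h, mul_zero, add_zero]
        by_contra hneg
        push_neg at hneg
        have := hδα i hneg
        rw [h] at this
        exact lt_irrefl _ this
      · exact Or.inl (hP2 i h)
    by_cases h5a : ∃ i, α i < 0 ∧ δ i + lm * α i < 0
    · -- rates cross: pair a strict consumer with a producer
      obtain ⟨i₂, hα2, hd2⟩ := h5a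
      have hδ2 : 0 ≤ δ i₂ := by
        by_contra hh
        push_neg at hh
        exact absurd (hδα i₂ hh) (not_lt.mpr hα2.le)
      have hlmpos : 0 < lm := by
        rcases eq_or_lt_of_le hlm0 with h | h
        · rw [← h, zero_mul, add_zero] at hd2; linarith
        · exact h
      obtain ⟨i₁, hα1, hd1⟩ := hattain hlmpos
      have hl2nn : 0 ≤ δ i₂ / (-α i₂) := div_nonneg hδ2 (by linarith)
      have hd2' : δ i₂ + (δ i₂ / (-α i₂)) * α i₂ = 0 := by
        linear_combination -div_mul_cancel₀ (δ i₂) (show -α i₂ ≠ 0 by linarith)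
      have hl2lt : δ i₂ / (-α i₂) < lm := by
        rw [div_lt_iff₀ (by linarith : (0:ℝ) < -α i₂)]
        linarith
      have hd1' : δ i₁ + (δ i₂ / (-α i₂)) * α i₁ < 0 := by
        nlinarith [mul_pos (sub_pos.mpr hl2lt) hα1]
      obtain ⟨τ, hτ, B, hB, A, hψ⟩ := pick_tau (δ i₁ + (δ i₂ / (-α i₂)) * α i₁)
        (e i₁ + (δ i₂ / (-α i₂)) * b i₁) (Or.inl hd1')
      have hne : i₁ ≠ i₂ := fun h => by rw [h] at hα1; linarith
      obtain ⟨s₁, hs₁0, hs₁⟩ := quad_ge' (α i₁) (b i₁)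
        ((((1/2) * α i₂ * (x₀ i₂)^2 + b i₂ * (x₀ i₂))
          + ((1/2) * α i₁ * (x₀ i₁)^2 + b i₁ * (x₀ i₁)))) τ hα1 hτ
      have hwex : ∀ s : ℝ, ∃ ww, s₁ ≤ s →
          ((1/2) * α i₂ * ww^2 + b i₂ * ww
            = ((1/2) * α i₂ * (x₀ i₂)^2 + b i₂ * (x₀ i₂))
              + ((1/2) * α i₁ * (x₀ i₁)^2 + b i₁ * (x₀ i₁))
              - ((1/2) * α i₁ * (τ*s)^2 + b i₁ * (τ*s))
            ∧ (e i₂ + (δ i₂ / (-α i₂)) * b i₂) * ww ≤ 0) := by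
        intro s
        by_cases hs : s₁ ≤ s
        · obtain ⟨ww, hw1, hw2⟩ := solve_quad (α i₂) (b i₂)
            (((1/2) * α i₂ * (x₀ i₂)^2 + b i₂ * (x₀ i₂))
              + ((1/2) * α i₁ * (x₀ i₁)^2 + b i₁ * (x₀ i₁))
              - ((1/2) * α i₁ * (τ*s)^2 + b i₁ * (τ*s)))
            (e i₂ + (δ i₂ / (-α i₂)) * b i₂)
            (Or.inr ⟨hα2, by linarith [hs₁ s hs]⟩)
          exact ⟨ww, fun _ => ⟨hw1, hw2⟩⟩
        · exact ⟨0, fun h => absurd h hs⟩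
      choose w hw using hwex
      exact leaf_absorb δ e α b ζ c c₀ x₀ z₀ hsl i₁ i₂ hne (δ i₂ / (-α i₂)) τ
        (le_of_eq hd2') s₁ hs₁0 w hw B A hB hψ
    push_neg at h5a
    by_cases h5b : ∃ i, δ i + lm * α i = 0 ∧ e i + lm * b i ≠ 0
    · obtain ⟨i₀, hd0, hε0⟩ := h5b
      rcases lt_trichotomy (α i₀) 0 with hαneg | hα0 | hαpos
      · -- producer-type bad coordinate
        rcases eq_or_lt_of_le hlm0 with hlmz | hlmpos
        · -- lm = 0 : no absorber needed
          have hδz : δ i₀ = 0 := by rw [← hlmz, zero_mul, add_zero] at hd0; exact hd0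
          have hez : e i₀ ≠ 0 := by rwa [← hlmz, zero_mul, add_zero] at hε0
          obtain ⟨τ, hτ, hετ, hετlt⟩ := sign_choice (e i₀)
          obtain ⟨s₁, hs₁0, hP⟩ := quad_le' (α i₀) (b i₀)
            ((1/2) * α i₀ * (x₀ i₀)^2 + b i₀ * (x₀ i₀)) τ hαneg hτ
          obtain ⟨B, hB, A, hQ⟩ := psi_bound (δ i₀) (e i₀) τ hτ (Or.inr ⟨hδz, hετlt hez⟩)
          exact leaf_noabsorb δ e α b ζ c c₀ x₀ z₀ hsl i₀ τ s₁ hs₁0 hP B A hB hQ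
        · -- lm > 0 : use the attainer of lm as an upward absorber
          obtain ⟨i₁, hα1, hd1⟩ := hattain hlmpos
          have hne : i₀ ≠ i₁ := fun h => by rw [h] at hαneg; linarith
          obtain ⟨τ, hτ, B, hB, A, hψ⟩ := pick_tau (δ i₀ + lm * α i₀) (e i₀ + lm * b i₀)
            (Or.inr ⟨hd0, hε0⟩)
          obtain ⟨s₁, hs₁0, hs₁⟩ := quad_le' (α i₀) (b i₀)
            (((1/2) * α i₁ * (x₀ i₁)^2 + b i₁ * (x₀ i₁))
              + ((1/2) * α i₀ * (x₀ i₀)^2 + b i₀ * (x₀ i₀))) τ hαneg hτ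
          have hwex : ∀ s : ℝ, ∃ ww, s₁ ≤ s →
              ((1/2) * α i₁ * ww^2 + b i₁ * ww
                = ((1/2) * α i₁ * (x₀ i₁)^2 + b i₁ * (x₀ i₁))
                  + ((1/2) * α i₀ * (x₀ i₀)^2 + b i₀ * (x₀ i₀))
                  - ((1/2) * α i₀ * (τ*s)^2 + b i₀ * (τ*s))
                ∧ (e i₁ + lm * b i₁) * ww ≤ 0) := by
            intro s
            by_cases hs : s₁ ≤ s
            · obtain ⟨ww, hw1, hw2⟩ := solve_quad (α i₁) (b i₁)
                (((1/2) * α i₁ * (x₀ i₁)^2 + b i₁ * (x₀ i₁))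
                  + ((1/2) * α i₀ * (x₀ i₀)^2 + b i₀ * (x₀ i₀))
                  - ((1/2) * α i₀ * (τ*s)^2 + b i₀ * (τ*s)))
                (e i₁ + lm * b i₁)
                (Or.inl ⟨hα1, by linarith [hs₁ s hs]⟩)
              exact ⟨ww, fun _ => ⟨hw1, hw2⟩⟩
            · exact ⟨0, fun h => absurd h hs⟩
          choose w hw using hwex
          exact leaf_absorb δ e α b ζ c c₀ x₀ z₀ hsl i₀ i₁ hne lm τ
            (le_of_eq hd1) s₁ hs₁0 w hw B A hB hψ
      · -- α i₀ = 0 : impossible (inert coordinate)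
        have hδz : δ i₀ = 0 := by rw [hα0, mul_zero, add_zero] at hd0; exact hd0
        obtain ⟨hbz, hez⟩ := hLinert i₀ hα0 hδz
        rw [hbz, mul_zero, add_zero, hez] at hε0
        exact absurd rfl hε0
      · -- consumer-type bad coordinate
        by_cases h5c : ∃ jj, α jj < 0 ∧ δ jj + lm * α jj ≤ 0
        · obtain ⟨j₂, hαj₂, hdj₂⟩ := h5c
          have hne : i₀ ≠ j₂ := fun h => by rw [h] at hαpos; linarith
          obtain ⟨τ, hτ, B, hB, A, hψ⟩ := pick_tau (δ i₀ + lm * α i₀) (e i₀ + lm * b i₀)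
            (Or.inr ⟨hd0, hε0⟩)
          obtain ⟨s₁, hs₁0, hs₁⟩ := quad_ge' (α i₀) (b i₀)
            (((1/2) * α j₂ * (x₀ j₂)^2 + b j₂ * (x₀ j₂))
              + ((1/2) * α i₀ * (x₀ i₀)^2 + b i₀ * (x₀ i₀))) τ hαpos hτ
          have hwex : ∀ s : ℝ, ∃ ww, s₁ ≤ s →
              ((1/2) * α j₂ * ww^2 + b j₂ * ww
                = ((1/2) * α j₂ * (x₀ j₂)^2 + b j₂ * (x₀ j₂))
                  + ((1/2) * α i₀ * (x₀ i₀)^2 + b i₀ * (x₀ i₀))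
                  - ((1/2) * α i₀ * (τ*s)^2 + b i₀ * (τ*s))
                ∧ (e j₂ + lm * b j₂) * ww ≤ 0) := by
            intro s
            by_cases hs : s₁ ≤ s
            · obtain ⟨ww, hw1, hw2⟩ := solve_quad (α j₂) (b j₂)
                (((1/2) * α j₂ * (x₀ j₂)^2 + b j₂ * (x₀ j₂))
                  + ((1/2) * α i₀ * (x₀ i₀)^2 + b i₀ * (x₀ i₀))
                  - ((1/2) * α i₀ * (τ*s)^2 + b i₀ * (τ*s)))
                (e j₂ + lm * b j₂)
                (Or.inr ⟨hαj₂, by linarith [hs₁ s hs]⟩)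
              exact ⟨ww, fun _ => ⟨hw1, hw2⟩⟩
            · exact ⟨0, fun h => absurd h hs⟩
          choose w hw using hwex
          exact leaf_absorb δ e α b ζ c c₀ x₀ z₀ hsl i₀ j₂ hne lm τ
            hdj₂ s₁ hs₁0 w hw B A hB hψ
        · -- no producer binds: a slightly larger multiplier is a strict certificate
          push_neg at h5c
          obtain ⟨lam', hlam'0, hd', hde'⟩ : ∃ lam' : ℝ, 0 ≤ lam' ∧
              (∀ i, 0 ≤ δ i + lam' * α i) ∧
              (∀ i, δ i + lam' * α i = 0 → e i + lam' * b i = 0) := by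
            have key : ∀ ep : ℝ, 0 < ep →
                (∀ i, 0 < α i → 0 < δ i + (lm + ep) * α i) := by
              intro ep hep i hαi
              have h6 := hP2 i hαi
              nlinarith [mul_pos hep hαi]
            by_cases hSm : (Finset.univ.filter (fun i => α i < 0)).Nonempty
            · obtain ⟨i₃, hi₃mem, hi₃min⟩ := Finset.exists_min_image _
                (fun i => (δ i + lm * α i) / (-α i)) hSm
              rw [Finset.mem_filter] at hi₃mem
              have hα3 := hi₃mem.2
              have hd3pos : 0 < δ i₃ + lm * α i₃ := h5c i₃ hα3
              set ep := ((δ i₃ + lm * α i₃) / (-α i₃)) / 2 with hepdef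
              have hep : 0 < ep := by
                apply half_pos
                exact div_pos hd3pos (by linarith)
              refine ⟨lm + ep, by linarith, ?_, ?_⟩
              · intro i
                rcases lt_trichotomy (α i) 0 with h | h | h
                · have h7 := hi₃min i (Finset.mem_filter.mpr ⟨Finset.mem_univ i, h⟩)
                  have h8 : 0 < δ i + lm * α i := h5c i h
                  have h9 : ep < (δ i + lm * α i) / (-α i) := by
                    have h10 : 0 < (δ i₃ + lm * α i₃) / (-α i₃) :=
                      div_pos hd3pos (by linarith)
                    calc ep < (δ i₃ + lm * α i₃) / (-α i₃) := by
                          rw [hepdef]; linarith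
                      _ ≤ _ := h7
                  rw [lt_div_iff₀ (by linarith : (0:ℝ) < -α i)] at h9
                  nlinarith
                · rcases hdall i with h6 | h6
                  · rw [h, mul_zero, add_zero] at h6 ⊢
                    exact h6
                  · rw [h] at h6; exact absurd h6 (lt_irrefl 0)
                · exact (key ep hep i h).le
              · intro i hzero
                rcases lt_trichotomy (α i) 0 with h | h | h
                · exfalso
                  have h7 := hi₃min i (Finset.mem_filter.mpr ⟨Finset.mem_univ i, h⟩)
                  have h8 : 0 < δ i + lm * α i := h5c i h
                  have h9 : ep < (δ i + lm * α i) / (-α i) := by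
                    have h10 : 0 < (δ i₃ + lm * α i₃) / (-α i₃) :=
                      div_pos hd3pos (by linarith)
                    calc ep < (δ i₃ + lm * α i₃) / (-α i₃) := by
                          rw [hepdef]; linarith
                      _ ≤ _ := h7
                  rw [lt_div_iff₀ (by linarith : (0:ℝ) < -α i)] at h9
                  nlinarith
                · have hδz : δ i = 0 := by
                    rcases hdall i with h6 | h6
                    · rw [h, mul_zero, add_zero] at hzero; exact hzero
                    · rw [h] at h6; exact absurd h6 (lt_irrefl 0)
                  obtain ⟨hbz, hez⟩ := hLinert i h hδz
                  rw [hbz, mul_zero, add_zero]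
                  exact hez
                · exfalso
                  exact absurd hzero (ne_of_gt (key ep hep i h))
            · refine ⟨lm + 1, by linarith, ?_, ?_⟩
              · intro i
                rcases lt_trichotomy (α i) 0 with h | h | h
                · exact (hSm ⟨i, Finset.mem_filter.mpr ⟨Finset.mem_univ i, h⟩⟩).elim
                · rcases hdall i with h6 | h6
                  · rw [h, mul_zero, add_zero] at h6 ⊢; exact h6
                  · rw [h] at h6; exact absurd h6 (lt_irrefl 0)
                · exact (key 1 one_pos i h).le
              · intro i hzero
                rcases lt_trichotomy (α i) 0 with h | h | h
                · exact (hSm ⟨i, Finset.mem_filter.mpr ⟨Finset.mem_univ i, h⟩⟩).elim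
                · have hδz : δ i = 0 := by
                    rcases hdall i with h6 | h6
                    · rw [h, mul_zero, add_zero] at hzero; exact hzero
                    · rw [h] at h6; exact absurd h6 (lt_irrefl 0)
                  obtain ⟨hbz, hez⟩ := hLinert i h hδz
                  rw [hbz, mul_zero, add_zero]
                  exact hez
                · exact absurd hzero (ne_of_gt (key 1 one_pos i h))
          exact (bounded_contra δ e α b ζ c c₀ lam' hlam'0 (hζall0 _) hd' hde' hunb).elim
    · -- no bad coordinate at lm : lm itself is a certificate
      push_neg at h5b
      have hd' : ∀ i, 0 ≤ δ i + lm * α i := by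
        intro i
        rcases hdall i with h | h
        · exact h
        · exact h5a i h
      exact (bounded_contra δ e α b ζ c c₀ lm hlm0 (hζall0 _) hd'
        (fun i => h5b i) hunb).elim
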